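/- Let α > 0, λ ∈ ℝ, φ̃ ∈ ℝ, and set θ = α/2, C = (α²/8)·(φ̃ − α/4)·(φ̃ − 3α/4), D = λ²/8, and δ = 4φ̃/α. Then the real vector space Sol(C,D,θ) of triples (T, l, σ) of smooth functions ℝ → ℝ satisfying, for all t ∈ ℝ, C·l(t) = 0, l″(t) = 2D·l(t), σ′(t) = (θ²/4)·T″(t), and T‴(t) = 8D·T′(t), has dimension 6 if δ ∈ {1, 3}, and dimension 4 otherwise. -/

import Mathlib

open Real

private lemma one_le_inf' : (1 : WithTop ℕ∞) ≤ ((⊤ : ℕ∞) : WithTop ℕ∞) := by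
  exact_mod_cast le_top

private lemma inf_ne_zero' : ((⊤ : ℕ∞) : WithTop ℕ∞) ≠ 0 :=
  (zero_lt_one.trans_le one_le_inf').ne'

private lemma deriv_fun_add' {f g : ℝ → ℝ} (hf : Differentiable ℝ f)
    (hg : Differentiable ℝ g) : deriv (f + g) = deriv f + deriv g :=
  funext fun t => deriv_add (hf t) (hg t)

private lemma deriv_fun_smul' (c : ℝ) {f : ℝ → ℝ} (hf : Differentiable ℝ f) :
    deriv (c • f) = c • deriv f :=
  funext fun t => deriv_const_smul c (hf t)

private lemma smooth_deriv' {f : ℝ → ℝ} (hf : ContDiff ℝ (⊤ : ℕ∞) f) :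
    ContDiff ℝ (⊤ : ℕ∞) (deriv f) :=
  (contDiff_infty_iff_deriv.mp hf).2

/-- The space of triples `(T, l, σ)` of smooth functions satisfying the isovector
system `C·l = 0`, `l″ = 2D·l`, `σ′ = (θ²/4)·T″`, `T‴ = 8D·T′`. -/
def Sol (C D θ : ℝ) : Submodule ℝ ((ℝ → ℝ) × (ℝ → ℝ) × (ℝ → ℝ)) where
  carrier := {p | ContDiff ℝ (⊤ : ℕ∞) p.1 ∧ ContDiff ℝ (⊤ : ℕ∞) p.2.1 ∧
    ContDiff ℝ (⊤ : ℕ∞) p.2.2 ∧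
    (∀ t, C * p.2.1 t = 0) ∧
    (∀ t, deriv (deriv p.2.1) t = 2 * D * p.2.1 t) ∧
    (∀ t, deriv p.2.2 t = θ ^ 2 / 4 * deriv (deriv p.1) t) ∧
    (∀ t, deriv (deriv (deriv p.1)) t = 8 * D * deriv p.1 t)}
  zero_mem' := by
    have h0 : deriv (0 : ℝ → ℝ) = 0 := funext fun x => deriv_const x 0
    refine ⟨contDiff_const, contDiff_const, contDiff_const, ?_, ?_, ?_, ?_⟩ <;>
      intro t <;> simp [h0]
  add_mem' := by
    rintro ⟨T₁, l₁, σ₁⟩ ⟨T₂, l₂, σ₂⟩ ⟨hT₁, hl₁, hσ₁, e₁, e₂, e₃, e₄⟩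
      ⟨hT₂, hl₂, hσ₂, f₁, f₂, f₃, f₄⟩
    have dT₁ : Differentiable ℝ T₁ := hT₁.differentiable inf_ne_zero'
    have dT₂ : Differentiable ℝ T₂ := hT₂.differentiable inf_ne_zero'
    have dl₁ : Differentiable ℝ l₁ := hl₁.differentiable inf_ne_zero'
    have dl₂ : Differentiable ℝ l₂ := hl₂.differentiable inf_ne_zero'
    have dσ₁ : Differentiable ℝ σ₁ := hσ₁.differentiable inf_ne_zero'
    have dσ₂ : Differentiable ℝ σ₂ := hσ₂.differentiable inf_ne_zero'
    have ddl₁ : Differentiable ℝ (deriv l₁) := (smooth_deriv' hl₁).differentiable inf_ne_zero'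
    have ddl₂ : Differentiable ℝ (deriv l₂) := (smooth_deriv' hl₂).differentiable inf_ne_zero'
    have ddT₁ : Differentiable ℝ (deriv T₁) := (smooth_deriv' hT₁).differentiable inf_ne_zero'
    have ddT₂ : Differentiable ℝ (deriv T₂) := (smooth_deriv' hT₂).differentiable inf_ne_zero'
    have dddT₁ : Differentiable ℝ (deriv (deriv T₁)) :=
      (smooth_deriv' (smooth_deriv' hT₁)).differentiable inf_ne_zero'
    have dddT₂ : Differentiable ℝ (deriv (deriv T₂)) :=
      (smooth_deriv' (smooth_deriv' hT₂)).differentiable inf_ne_zero'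
    have hl : deriv (deriv (l₁ + l₂)) = deriv (deriv l₁) + deriv (deriv l₂) := by
      rw [deriv_fun_add' dl₁ dl₂, deriv_fun_add' ddl₁ ddl₂]
    have hT2 : deriv (deriv (T₁ + T₂)) = deriv (deriv T₁) + deriv (deriv T₂) := by
      rw [deriv_fun_add' dT₁ dT₂, deriv_fun_add' ddT₁ ddT₂]
    have hT3 : deriv (deriv (deriv (T₁ + T₂)))
        = deriv (deriv (deriv T₁)) + deriv (deriv (deriv T₂)) := by
      rw [hT2, deriv_fun_add' dddT₁ dddT₂]
    refine ⟨hT₁.add hT₂, hl₁.add hl₂, hσ₁.add hσ₂, ?_, ?_, ?_, ?_⟩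
    · intro t
      simp only [Prod.mk_add_mk, Pi.add_apply, mul_add, e₁ t, f₁ t, add_zero]
    · intro t
      simp only [Prod.mk_add_mk]
      rw [hl]
      simp only [Pi.add_apply, e₂ t, f₂ t]; ring
    · intro t
      simp only [Prod.mk_add_mk]
      rw [hT2, deriv_fun_add' dσ₁ dσ₂]
      simp only [Pi.add_apply, e₃ t, f₃ t]; ring
    · intro t
      simp only [Prod.mk_add_mk]
      rw [hT3, deriv_fun_add' dT₁ dT₂]
      simp only [Pi.add_apply, e₄ t, f₄ t]; ring
  smul_mem' := by
    rintro c ⟨T, l, σ⟩ ⟨hT, hl, hσ, e₁, e₂, e₃, e₄⟩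
    have dT : Differentiable ℝ T := hT.differentiable inf_ne_zero'
    have dl : Differentiable ℝ l := hl.differentiable inf_ne_zero'
    have dσ : Differentiable ℝ σ := hσ.differentiable inf_ne_zero'
    have ddl : Differentiable ℝ (deriv l) := (smooth_deriv' hl).differentiable inf_ne_zero'
    have ddT : Differentiable ℝ (deriv T) := (smooth_deriv' hT).differentiable inf_ne_zero'
    have dddT : Differentiable ℝ (deriv (deriv T)) :=
      (smooth_deriv' (smooth_deriv' hT)).differentiable inf_ne_zero'
    have hl2 : deriv (deriv (c • l)) = c • deriv (deriv l) := by
      rw [deriv_fun_smul' c dl, deriv_fun_smul' c ddl]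
    have hT2 : deriv (deriv (c • T)) = c • deriv (deriv T) := by
      rw [deriv_fun_smul' c dT, deriv_fun_smul' c ddT]
    have hT3 : deriv (deriv (deriv (c • T))) = c • deriv (deriv (deriv T)) := by
      rw [hT2, deriv_fun_smul' c dddT]
    refine ⟨hT.const_smul c, hl.const_smul c, hσ.const_smul c, ?_, ?_, ?_, ?_⟩
    · intro t
      simp only [Prod.smul_mk, Pi.smul_apply, smul_eq_mul]
      rw [mul_comm c (l t), ← mul_assoc, e₁ t, zero_mul]
    · intro t
      simp only [Prod.smul_mk]
      rw [hl2]
      simp only [Pi.smul_apply, smul_eq_mul, e₂ t]; ring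
    · intro t
      simp only [Prod.smul_mk]
      rw [hT2, deriv_fun_smul' c dσ]
      simp only [Pi.smul_apply, smul_eq_mul, e₃ t]; ring
    · intro t
      simp only [Prod.smul_mk]
      rw [hT3, deriv_fun_smul' c dT]
      simp only [Pi.smul_apply, smul_eq_mul, e₄ t]; ring


section helpers
open Real Set

private lemma uniq_second_order (k : ℝ) {f : ℝ → ℝ} (hf : ContDiff ℝ (⊤ : ℕ∞) f)
    (heq : ∀ t, deriv (deriv f) t = k * f t) (h0 : f 0 = 0) (h1 : deriv f 0 = 0) :
    ∀ t, f t = 0 := by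
  set L : (ℝ × ℝ) →L[ℝ] ℝ × ℝ :=
    (ContinuousLinearMap.snd ℝ ℝ ℝ).prod (k • ContinuousLinearMap.fst ℝ ℝ ℝ) with hL
  have hdf : Differentiable ℝ f := hf.differentiable inf_ne_zero'
  have hddf : Differentiable ℝ (deriv f) := (smooth_deriv' hf).differentiable inf_ne_zero'
  set F : ℝ → ℝ × ℝ := fun s => (f s, deriv f s) with hFdef
  have hF : ∀ s : ℝ, HasDerivAt F (L (F s)) s := by
    intro s
    have h2' : HasDerivAt (deriv f) (deriv (deriv f) s) s := (hddf s).hasDerivAt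
    rw [heq s] at h2'
    exact HasDerivAt.prodMk ((hdf s).hasDerivAt) h2'
  have hG : ∀ s : ℝ, HasDerivAt (fun _ : ℝ => ((0 : ℝ), (0 : ℝ))) (L ((0 : ℝ), (0 : ℝ))) s := by
    intro s
    have : L ((0 : ℝ), (0 : ℝ)) = ((0 : ℝ), (0 : ℝ)) := by simp [hL]
    rw [this]
    exact hasDerivAt_const s _
  intro t
  have ht : t ∈ Icc (-(|t| + 1)) (|t| + 1) := by
    constructor <;> [nlinarith [abs_nonneg t, neg_abs_le t]; nlinarith [le_abs_self t]]
  have h0' : (0 : ℝ) ∈ Ioo (-(|t| + 1)) (|t| + 1) := by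
    constructor <;> nlinarith [abs_nonneg t]
  have key := ODE_solution_unique_of_mem_Icc
    (v := fun _ x => L x) (s := fun _ => (univ : Set (ℝ × ℝ)))
    (fun _ _ => L.lipschitz.lipschitzOnWith)
    h0'
    (fun s _ => (hF s).continuousAt.continuousWithinAt)
    (fun s _ => hF s) (fun _ _ => trivial)
    (fun s _ => (hG s).continuousAt.continuousWithinAt)
    (fun s _ => hG s) (fun _ _ => trivial)
    (by simp [hFdef, h0, h1])
  have := key ht
  simpa [hFdef] using congrArg Prod.fst this


/-- Existence for `f'' = c² f` with prescribed initial data. -/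
private lemma exists_second_order (c a b : ℝ) :
    ∃ f : ℝ → ℝ, ContDiff ℝ (⊤ : ℕ∞) f ∧ f 0 = a ∧ deriv f 0 = b ∧
      ∀ t, deriv (deriv f) t = c ^ 2 * f t := by
  rcases eq_or_ne c 0 with hc | hc
  · have h1 : deriv (fun t : ℝ => a + b * t) = fun _ => b := by
      funext t
      exact (by simpa using ((hasDerivAt_id t).const_mul b).const_add a : HasDerivAt _ b t).deriv
    refine ⟨fun t => a + b * t, contDiff_const.add (contDiff_const.mul contDiff_id),
      by simp, by rw [h1], ?_⟩
    intro t; rw [h1, deriv_const]; simp [hc]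
  · have hct : ∀ t : ℝ, HasDerivAt (fun t : ℝ => c * t) c t := fun t => by
      simpa using (hasDerivAt_id t).const_mul c
    have h1 : deriv (fun t => a * cosh (c * t) + (b / c) * sinh (c * t))
        = fun t => a * c * sinh (c * t) + b * cosh (c * t) := by
      funext t
      refine HasDerivAt.deriv ?_
      have := (((hct t).cosh).const_mul a).add (((hct t).sinh).const_mul (b / c))
      convert this using 1
      · rfl
      field_simp
    have h2 : deriv (fun t => a * c * sinh (c * t) + b * cosh (c * t))
        = fun t => c ^ 2 * (a * cosh (c * t) + b / c * sinh (c * t)) := by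
      funext t
      refine HasDerivAt.deriv ?_
      have := (((hct t).sinh).const_mul (a * c)).add (((hct t).cosh).const_mul b)
      convert this using 1
      · rfl
      field_simp
    refine ⟨fun t => a * cosh (c * t) + (b / c) * sinh (c * t),
      (contDiff_const.mul (Real.contDiff_cosh.comp (contDiff_const.mul contDiff_id))).add
        (contDiff_const.mul (Real.contDiff_sinh.comp (contDiff_const.mul contDiff_id))),
      by simp, by rw [h1]; simp, ?_⟩
    intro t; rw [h1, h2]

/-- Existence for `T''' = c² T'` with prescribed initial data. -/
private lemma exists_third_order (c a b d : ℝ) :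
    ∃ T : ℝ → ℝ, ContDiff ℝ (⊤ : ℕ∞) T ∧ T 0 = a ∧ deriv T 0 = b ∧
      deriv (deriv T) 0 = d ∧
      ∀ t, deriv (deriv (deriv T)) t = c ^ 2 * deriv T t := by
  rcases eq_or_ne c 0 with hc | hc
  · have h1 : deriv (fun t : ℝ => a + b * t + d * (t ^ 2 / 2)) = fun t => b + d * t := by
      funext t
      refine HasDerivAt.deriv ?_
      have := (((hasDerivAt_id t).const_mul b).const_add a).add
        ((((hasDerivAt_pow 2 t)).div_const 2).const_mul d)
      convert this using 1
      · rfl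
      simp
    have h2 : deriv (fun t : ℝ => b + d * t) = fun _ => d := by
      funext t
      exact (by simpa using ((hasDerivAt_id t).const_mul d).const_add b : HasDerivAt _ d t).deriv
    refine ⟨fun t => a + b * t + d * (t ^ 2 / 2),
      (contDiff_const.add (contDiff_const.mul contDiff_id)).add
        (contDiff_const.mul ((contDiff_id.pow 2).div_const 2)),
      by simp, by rw [h1]; simp, by rw [h1, h2], ?_⟩
    intro t; rw [h1, h2, deriv_const]; simp [hc]
  · have hct : ∀ t : ℝ, HasDerivAt (fun t : ℝ => c * t) c t := fun t => by
      simpa using (hasDerivAt_id t).const_mul c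
    have h1 : deriv (fun t => (a - d / c ^ 2) + (b / c) * sinh (c * t)
          + (d / c ^ 2) * cosh (c * t))
        = fun t => b * cosh (c * t) + (d / c) * sinh (c * t) := by
      funext t
      refine HasDerivAt.deriv ?_
      have := ((((hct t).sinh).const_mul (b / c)).const_add (a - d / c ^ 2)).add
        (((hct t).cosh).const_mul (d / c ^ 2))
      convert this using 1
      · rfl
      field_simp
    have h2 : deriv (fun t => b * cosh (c * t) + (d / c) * sinh (c * t))
        = fun t => b * c * sinh (c * t) + d * cosh (c * t) := by
      funext t
      refine HasDerivAt.deriv ?_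
      have := (((hct t).cosh).const_mul b).add (((hct t).sinh).const_mul (d / c))
      convert this using 1
      · rfl
      field_simp
    have h3 : deriv (fun t => b * c * sinh (c * t) + d * cosh (c * t))
        = fun t => c ^ 2 * (b * cosh (c * t) + d / c * sinh (c * t)) := by
      funext t
      refine HasDerivAt.deriv ?_
      have := (((hct t).sinh).const_mul (b * c)).add (((hct t).cosh).const_mul d)
      convert this using 1
      · rfl
      field_simp
    refine ⟨fun t => (a - d / c ^ 2) + (b / c) * sinh (c * t) + (d / c ^ 2) * cosh (c * t),
      ((contDiff_const.add
        (contDiff_const.mul (Real.contDiff_sinh.comp (contDiff_const.mul contDiff_id)))).add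
        (contDiff_const.mul (Real.contDiff_cosh.comp (contDiff_const.mul contDiff_id)))),
      by simp, by rw [h1]; simp, by rw [h1, h2]; simp, ?_⟩
    intro t; rw [h1, h2, h3]

set_option maxHeartbeats 1000000 in
private noncomputable def Φ6 (C D θ : ℝ) : Sol C D θ →ₗ[ℝ] (Fin 6 → ℝ) where
  toFun p := ![p.1.1 0, deriv p.1.1 0, deriv (deriv p.1.1) 0,
    p.1.2.2 0, p.1.2.1 0, deriv p.1.2.1 0]
  map_add' p q := by
    obtain ⟨hT₁, hl₁, -, -⟩ := p.2
    obtain ⟨hT₂, hl₂, -, -⟩ := q.2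
    have dT₁ : Differentiable ℝ (p : (ℝ→ℝ)×(ℝ→ℝ)×(ℝ→ℝ)).1 := hT₁.differentiable inf_ne_zero'
    have dT₂ : Differentiable ℝ (q : (ℝ→ℝ)×(ℝ→ℝ)×(ℝ→ℝ)).1 := hT₂.differentiable inf_ne_zero'
    have dl₁ : Differentiable ℝ (p : (ℝ→ℝ)×(ℝ→ℝ)×(ℝ→ℝ)).2.1 := hl₁.differentiable inf_ne_zero'
    have dl₂ : Differentiable ℝ (q : (ℝ→ℝ)×(ℝ→ℝ)×(ℝ→ℝ)).2.1 := hl₂.differentiable inf_ne_zero'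
    have ddT₁ : Differentiable ℝ (deriv (p : (ℝ→ℝ)×(ℝ→ℝ)×(ℝ→ℝ)).1) :=
      (smooth_deriv' hT₁).differentiable inf_ne_zero'
    have ddT₂ : Differentiable ℝ (deriv (q : (ℝ→ℝ)×(ℝ→ℝ)×(ℝ→ℝ)).1) :=
      (smooth_deriv' hT₂).differentiable inf_ne_zero'
    have hTd := deriv_fun_add' dT₁ dT₂
    have hTdd : deriv (deriv ((p : (ℝ→ℝ)×(ℝ→ℝ)×(ℝ→ℝ)).1 + (q : (ℝ→ℝ)×(ℝ→ℝ)×(ℝ→ℝ)).1))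
        = deriv (deriv (p : (ℝ→ℝ)×(ℝ→ℝ)×(ℝ→ℝ)).1) + deriv (deriv (q : (ℝ→ℝ)×(ℝ→ℝ)×(ℝ→ℝ)).1) := by
      rw [hTd]; exact deriv_fun_add' ddT₁ ddT₂
    have hld := deriv_fun_add' dl₁ dl₂
    have hTdd2 := deriv_fun_add' ddT₁ ddT₂
    funext i
    fin_cases i <;>
      simp [Submodule.coe_add, Prod.fst_add, Prod.snd_add, hTd, hTdd, hTdd2, hld, Pi.add_apply,
        Matrix.cons_val_zero, Matrix.cons_val_one, Matrix.head_cons, Matrix.cons_val_succ] <;> rfl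
  map_smul' c p := by
    obtain ⟨hT, hl, -, -⟩ := p.2
    have dT : Differentiable ℝ (p : (ℝ→ℝ)×(ℝ→ℝ)×(ℝ→ℝ)).1 := hT.differentiable inf_ne_zero'
    have dl : Differentiable ℝ (p : (ℝ→ℝ)×(ℝ→ℝ)×(ℝ→ℝ)).2.1 := hl.differentiable inf_ne_zero'
    have ddT : Differentiable ℝ (deriv (p : (ℝ→ℝ)×(ℝ→ℝ)×(ℝ→ℝ)).1) :=
      (smooth_deriv' hT).differentiable inf_ne_zero'
    have hTd := deriv_fun_smul' c dT
    have hTdd : deriv (deriv (c • (p : (ℝ→ℝ)×(ℝ→ℝ)×(ℝ→ℝ)).1))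
        = c • deriv (deriv (p : (ℝ→ℝ)×(ℝ→ℝ)×(ℝ→ℝ)).1) := by
      rw [hTd]; exact deriv_fun_smul' c ddT
    have hld := deriv_fun_smul' c dl
    have hTdd2 := deriv_fun_smul' c ddT
    funext i
    fin_cases i <;>
      simp [Submodule.coe_smul, Prod.smul_fst, Prod.smul_snd, hTd, hTdd, hTdd2, hld, Pi.smul_apply,
        Matrix.cons_val_zero, Matrix.cons_val_one, Matrix.head_cons, Matrix.cons_val_succ] <;> rfl

set_option maxHeartbeats 1000000 in
private noncomputable def Φ4 (C D θ : ℝ) : Sol C D θ →ₗ[ℝ] (Fin 4 → ℝ) where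
  toFun p := ![p.1.1 0, deriv p.1.1 0, deriv (deriv p.1.1) 0, p.1.2.2 0]
  map_add' p q := by
    obtain ⟨hT₁, -, -⟩ := p.2
    obtain ⟨hT₂, -, -⟩ := q.2
    have dT₁ : Differentiable ℝ (p : (ℝ→ℝ)×(ℝ→ℝ)×(ℝ→ℝ)).1 := hT₁.differentiable inf_ne_zero'
    have dT₂ : Differentiable ℝ (q : (ℝ→ℝ)×(ℝ→ℝ)×(ℝ→ℝ)).1 := hT₂.differentiable inf_ne_zero'
    have ddT₁ : Differentiable ℝ (deriv (p : (ℝ→ℝ)×(ℝ→ℝ)×(ℝ→ℝ)).1) :=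
      (smooth_deriv' hT₁).differentiable inf_ne_zero'
    have ddT₂ : Differentiable ℝ (deriv (q : (ℝ→ℝ)×(ℝ→ℝ)×(ℝ→ℝ)).1) :=
      (smooth_deriv' hT₂).differentiable inf_ne_zero'
    have hTd := deriv_fun_add' dT₁ dT₂
    have hTdd : deriv (deriv ((p : (ℝ→ℝ)×(ℝ→ℝ)×(ℝ→ℝ)).1 + (q : (ℝ→ℝ)×(ℝ→ℝ)×(ℝ→ℝ)).1))
        = deriv (deriv (p : (ℝ→ℝ)×(ℝ→ℝ)×(ℝ→ℝ)).1) + deriv (deriv (q : (ℝ→ℝ)×(ℝ→ℝ)×(ℝ→ℝ)).1) := by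
      rw [hTd]; exact deriv_fun_add' ddT₁ ddT₂
    have hTdd2 := deriv_fun_add' ddT₁ ddT₂
    funext i
    fin_cases i <;>
      simp [Submodule.coe_add, Prod.fst_add, Prod.snd_add, hTd, hTdd, hTdd2, Pi.add_apply,
        Matrix.cons_val_zero, Matrix.cons_val_one, Matrix.head_cons, Matrix.cons_val_succ] <;> rfl
  map_smul' c p := by
    obtain ⟨hT, -, -⟩ := p.2
    have dT : Differentiable ℝ (p : (ℝ→ℝ)×(ℝ→ℝ)×(ℝ→ℝ)).1 := hT.differentiable inf_ne_zero'
    have ddT : Differentiable ℝ (deriv (p : (ℝ→ℝ)×(ℝ→ℝ)×(ℝ→ℝ)).1) :=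
      (smooth_deriv' hT).differentiable inf_ne_zero'
    have hTd := deriv_fun_smul' c dT
    have hTdd : deriv (deriv (c • (p : (ℝ→ℝ)×(ℝ→ℝ)×(ℝ→ℝ)).1))
        = c • deriv (deriv (p : (ℝ→ℝ)×(ℝ→ℝ)×(ℝ→ℝ)).1) := by
      rw [hTd]; exact deriv_fun_smul' c ddT
    have hTdd2 := deriv_fun_smul' c ddT
    funext i
    fin_cases i <;>
      simp [Submodule.coe_smul, Prod.smul_fst, Prod.smul_snd, hTd, hTdd, hTdd2, Pi.smul_apply,
        Matrix.cons_val_zero, Matrix.cons_val_one, Matrix.head_cons, Matrix.cons_val_succ] <;> rfl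

private lemma finrank_Sol_eq_six (lam θ D : ℝ) (hD : D = lam ^ 2 / 8) :
    Module.finrank ℝ (Sol 0 D θ) = 6 := by
  have hinj : Function.Injective (Φ6 0 D θ) := by
    rw [← LinearMap.ker_eq_bot, LinearMap.ker_eq_bot']
    rintro ⟨⟨T, l, σ⟩, hT, hl, hσ, e1, e2, e3, e4⟩ hm
    have h0 := fun i => congrFun hm i
    have hT0 : T 0 = 0 := by simpa [Φ6] using h0 0
    have hT1 : deriv T 0 = 0 := by simpa [Φ6] using h0 1
    have hT2 : deriv (deriv T) 0 = 0 := by simpa [Φ6] using h0 2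
    have hσ0 : σ 0 = 0 := by simpa [Φ6] using h0 3
    have hl0 : l 0 = 0 := by simpa [Φ6] using h0 4
    have hl1 : deriv l 0 = 0 := by simpa [Φ6] using h0 5
    have hlz : ∀ t, l t = 0 := uniq_second_order (2 * D) hl e2 hl0 hl1
    have hTz' : ∀ t, deriv T t = 0 :=
      uniq_second_order (8 * D) (smooth_deriv' hT) e4 hT1 hT2
    have hTz : ∀ t, T t = 0 := fun t =>
      (is_const_of_deriv_eq_zero (hT.differentiable inf_ne_zero') hTz' t 0).trans hT0
    have hddT : ∀ t, deriv (deriv T) t = 0 := by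
      have h1 : deriv T = fun _ => (0 : ℝ) := funext hTz'
      intro t; rw [h1]; simp
    have hσ' : ∀ t, deriv σ t = 0 := fun t => by rw [e3 t, hddT t, mul_zero]
    have hσz : ∀ t, σ t = 0 := fun t =>
      (is_const_of_deriv_eq_zero (hσ.differentiable inf_ne_zero') hσ' t 0).trans hσ0
    refine Subtype.ext ?_
    show (T, l, σ) = 0
    rw [show T = 0 from funext hTz, show l = 0 from funext hlz, show σ = 0 from funext hσz]
    rfl
  have hsurj : Function.Surjective (Φ6 0 D θ) := by
    intro v
    obtain ⟨T, hT, hT0, hT1, hT2, hTode⟩ := exists_third_order lam (v 0) (v 1) (v 2)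
    obtain ⟨l, hl, hl0, hl1, hlode⟩ := exists_second_order (lam / 2) (v 4) (v 5)
    have hdT : Differentiable ℝ (deriv T) := (smooth_deriv' hT).differentiable inf_ne_zero'
    set σ : ℝ → ℝ := fun t => v 3 + θ ^ 2 / 4 * (deriv T t - v 1) with hσdef
    have hσc : ContDiff ℝ (⊤ : ℕ∞) σ :=
      contDiff_const.add (contDiff_const.mul ((smooth_deriv' hT).sub contDiff_const))
    have hσ' : ∀ t, deriv σ t = θ ^ 2 / 4 * deriv (deriv T) t := by
      intro t
      have hd : HasDerivAt σ (θ ^ 2 / 4 * deriv (deriv T) t) t :=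
        ((((hdT t).hasDerivAt).sub_const (v 1)).const_mul (θ ^ 2 / 4)).const_add (v 3)
      exact hd.deriv
    have hmem : (T, l, σ) ∈ Sol 0 D θ := by
      refine ⟨hT, hl, hσc, fun t => by ring, fun t => ?_, hσ', fun t => ?_⟩
      · rw [hlode t, hD]; ring
      · rw [hTode t, hD]; ring
    refine ⟨⟨(T, l, σ), hmem⟩, ?_⟩
    funext i
    fin_cases i <;>
      (simp [Φ6, hT0, hT1, hT2, hl0, hl1, hσdef]; try rfl)
  have e := LinearEquiv.ofBijective (Φ6 0 D θ) ⟨hinj, hsurj⟩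
  rw [e.finrank_eq, Module.finrank_fin_fun]

private lemma finrank_Sol_eq_four (lam θ C D : ℝ) (hD : D = lam ^ 2 / 8) (hC : C ≠ 0) :
    Module.finrank ℝ (Sol C D θ) = 4 := by
  have hinj : Function.Injective (Φ4 C D θ) := by
    rw [← LinearMap.ker_eq_bot, LinearMap.ker_eq_bot']
    rintro ⟨⟨T, l, σ⟩, hT, hl, hσ, e1, e2, e3, e4⟩ hm
    have h0 := fun i => congrFun hm i
    have hT0 : T 0 = 0 := by simpa [Φ4] using h0 0
    have hT1 : deriv T 0 = 0 := by simpa [Φ4] using h0 1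
    have hT2 : deriv (deriv T) 0 = 0 := by simpa [Φ4] using h0 2
    have hσ0 : σ 0 = 0 := by simpa [Φ4] using h0 3
    have hlz : ∀ t, l t = 0 := fun t => (mul_eq_zero.mp (e1 t)).resolve_left hC
    have hTz' : ∀ t, deriv T t = 0 :=
      uniq_second_order (8 * D) (smooth_deriv' hT) e4 hT1 hT2
    have hTz : ∀ t, T t = 0 := fun t =>
      (is_const_of_deriv_eq_zero (hT.differentiable inf_ne_zero') hTz' t 0).trans hT0
    have hddT : ∀ t, deriv (deriv T) t = 0 := by
      have h1 : deriv T = fun _ => (0 : ℝ) := funext hTz'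
      intro t; rw [h1]; simp
    have hσ' : ∀ t, deriv σ t = 0 := fun t => by rw [e3 t, hddT t, mul_zero]
    have hσz : ∀ t, σ t = 0 := fun t =>
      (is_const_of_deriv_eq_zero (hσ.differentiable inf_ne_zero') hσ' t 0).trans hσ0
    refine Subtype.ext ?_
    show (T, l, σ) = 0
    rw [show T = 0 from funext hTz, show l = 0 from funext hlz, show σ = 0 from funext hσz]
    rfl
  have hsurj : Function.Surjective (Φ4 C D θ) := by
    intro v
    obtain ⟨T, hT, hT0, hT1, hT2, hTode⟩ := exists_third_order lam (v 0) (v 1) (v 2)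
    have hdT : Differentiable ℝ (deriv T) := (smooth_deriv' hT).differentiable inf_ne_zero'
    set σ : ℝ → ℝ := fun t => v 3 + θ ^ 2 / 4 * (deriv T t - v 1) with hσdef
    have hσc : ContDiff ℝ (⊤ : ℕ∞) σ :=
      contDiff_const.add (contDiff_const.mul ((smooth_deriv' hT).sub contDiff_const))
    have hσ' : ∀ t, deriv σ t = θ ^ 2 / 4 * deriv (deriv T) t := by
      intro t
      have hd : HasDerivAt σ (θ ^ 2 / 4 * deriv (deriv T) t) t :=
        ((((hdT t).hasDerivAt).sub_const (v 1)).const_mul (θ ^ 2 / 4)).const_add (v 3)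
      exact hd.deriv
    have hz : deriv (fun _ : ℝ => (0 : ℝ)) = fun _ => (0 : ℝ) := by
      funext x; simp
    have hmem : (T, (fun _ => 0), σ) ∈ Sol C D θ := by
      refine ⟨hT, contDiff_const, hσc, fun t => by simp, fun t => ?_, hσ', fun t => ?_⟩
      · rw [hz, hz]; simp
      · rw [hTode t, hD]; ring
    refine ⟨⟨(T, (fun _ => 0), σ), hmem⟩, ?_⟩
    funext i
    fin_cases i <;>
      simp [Φ4, hT0, hT1, hT2, hσdef]
  have e := LinearEquiv.ofBijective (Φ4 C D θ) ⟨hinj, hsurj⟩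
  rw [e.finrank_eq, Module.finrank_fin_fun]

end helpers
/-- In the one-factor affine interest rate model with parameters `α > 0`, `λ`, `φ̃`,
setting `θ = α/2`, `C = (α²/8)(φ̃ − α/4)(φ̃ − 3α/4)`, `D = λ²/8` and `δ = 4φ̃/α`, the
isovector solution space has dimension `6` if `δ ∈ {1, 3}` and dimension `4` otherwise. -/
theorem finrank_Sol_affine_model (α lam phit θ C D δ : ℝ) (hα : 0 < α)
    (hθ : θ = α / 2) (hC : C = α ^ 2 / 8 * (phit - α / 4) * (phit - 3 * α / 4))
    (hD : D = lam ^ 2 / 8) (hδ : δ = 4 * phit / α) :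
    Module.finrank ℝ (Sol C D θ) = if δ = 1 ∨ δ = 3 then 6 else 4 := by
  have hαne : α ≠ 0 := ne_of_gt hα
  by_cases h : δ = 1 ∨ δ = 3
  · rw [if_pos h]
    have hC0 : C = 0 := by
      rcases h with h | h
      · have h4 : 4 * phit = α := by
          rw [hδ, div_eq_one_iff_eq hαne] at h; exact h
        rw [hC, show phit - α / 4 = 0 by linarith]; ring
      · have h4 : 4 * phit = 3 * α := by
          rw [hδ, div_eq_iff hαne] at h; linarith
        rw [hC, show phit - 3 * α / 4 = 0 by linarith]; ring
    subst hC0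
    exact finrank_Sol_eq_six lam θ D hD
  · rw [if_neg h]
    push_neg at h
    have hC0 : C ≠ 0 := by
      intro hz
      rw [hC] at hz
      have hne : α ^ 2 / 8 ≠ 0 := by positivity
      rcases mul_eq_zero.mp hz with hz1 | hz2
      · rcases mul_eq_zero.mp hz1 with hz3 | hz4
        · exact hne hz3
        · exact h.1 (by rw [hδ]; field_simp; linarith)
      · exact h.2 (by rw [hδ]; field_simp; linarith)
    exact finrank_Sol_eq_four lam θ C D hD hC0
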